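/- Let E be a finite-dimensional real inner product space, let f : E → ℝ be continuously differentiable, R : E → ℝ continuous, N : E → ℝ continuous with N ≥ 0 everywhere, and let h : E → ℝ be a twice continuously differentiable, nonnegative, compactly supported function satisfying (1/2)·Δ_f h(x) = N(x) + (1/4)·R(x)·h(x) + (1/4)·e^{-f(x)}·h(x)² for all x ∈ E, where Δ_f h = Δh − (Dh)(∇f). Then for every x ∈ E, h(x) ≤ max(0, sup_y (−R(y)·e^{f(y)})). -/

import Mathlib

open Real

lemma secondDeriv_nonpos_of_max (g : ℝ → ℝ) (hg : ContDiff ℝ 2 g)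
    (hmax : ∀ t, g t ≤ g 0) : deriv (deriv g) 0 ≤ 0 := by
  by_contra hL
  push_neg at hL
  have hloc : IsLocalMax g 0 := Filter.Eventually.of_forall hmax
  have hd0 : deriv g 0 = 0 := hloc.deriv_eq_zero
  have hg1 : ContDiff ℝ 1 (deriv g) := by
    have := (contDiff_succ_iff_deriv (n := 1)).mp (by exact_mod_cast hg)
    exact this.2.2
  have hD : HasDerivAt (deriv g) (deriv (deriv g) 0) 0 :=
    ((hg1.differentiable (by norm_num)) 0).hasDerivAt
  have hslope := hasDerivAt_iff_tendsto_slope.mp hD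
  have hev : ∀ᶠ t in nhdsWithin 0 {(0:ℝ)}ᶜ, 0 < slope (deriv g) 0 t :=
    hslope.eventually (eventually_gt_nhds hL)
  rw [eventually_nhdsWithin_iff, Metric.eventually_nhds_iff] at hev
  obtain ⟨ε, hε, hev⟩ := hev
  have hpos : ∀ t ∈ Set.Ioo (0:ℝ) ε, 0 < deriv g t := by
    intro t ht
    have h1 : 0 < slope (deriv g) 0 t := by
      exact hev (by simp [Real.dist_eq, abs_of_pos ht.1, ht.2]) ht.1.ne'
    rw [slope_def_field] at h1
    have := mul_pos h1 ht.1
    rwa [hd0, sub_zero, sub_zero, div_mul_cancel₀ _ ht.1.ne'] at this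
  have hmono : StrictMonoOn g (Set.Icc 0 (ε/2)) := by
    apply strictMonoOn_of_deriv_pos (convex_Icc _ _) hg.continuous.continuousOn
    intro t ht
    rw [interior_Icc] at ht
    exact hpos t ⟨ht.1, ht.2.trans (by linarith)⟩
  have : g 0 < g (ε/2) :=
    hmono (Set.left_mem_Icc.mpr (by linarith)) (Set.right_mem_Icc.mpr (by linarith)) (by linarith)
  exact absurd (hmax (ε/2)) (not_le.mpr this)

/-- The Laplacian of a map `u : E → F` on a finite-dimensional real inner product space:
the sum of the second derivatives `∂²u/∂eᵢ²` over an orthonormal basis `(eᵢ)` of `E`. -/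
noncomputable def laplacian {E F : Type*} [NormedAddCommGroup E] [InnerProductSpace ℝ E]
    [FiniteDimensional ℝ E] [NormedAddCommGroup F] [NormedSpace ℝ F]
    (u : E → F) (x : E) : F :=
  ∑ i, fderiv ℝ (fderiv ℝ u) x (stdOrthonormalBasis ℝ E i) (stdOrthonormalBasis ℝ E i)

/-- **Weighted `C⁰`-estimate for monopoles** (Euclidean form):
if `h ≥ 0` is `C²`, compactly supported, `N ≥ 0` continuous, `R` continuous, `f` of class
`C¹`, and `(1/2) Δ_f h = N + (1/4) R h + (1/4) e^{-f} h²` everywhere (with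
`Δ_f h = Δh − (Dh)(∇f)`), then `h(x) ≤ max(0, sup_y (−R(y) e^{f(y)}))` for all `x`. -/
theorem weighted_C0_estimate {E : Type*} [NormedAddCommGroup E] [InnerProductSpace ℝ E]
    [FiniteDimensional ℝ E]
    (f : E → ℝ) (hf : ContDiff ℝ 1 f)
    (R N : E → ℝ) (hR : Continuous R) (hN : Continuous N) (hN0 : ∀ x, 0 ≤ N x)
    (h : E → ℝ) (hh : ContDiff ℝ 2 h) (hh0 : ∀ x, 0 ≤ h x) (hhc : HasCompactSupport h)
    (heq : ∀ x, (1 / 2) * (laplacian h x - fderiv ℝ h x (gradient f x))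
        = N x + (1 / 4) * R x * h x + (1 / 4) * Real.exp (-f x) * (h x) ^ 2) :
    ∀ x, (h x : EReal) ≤ max 0 (⨆ y, ((-R y * Real.exp (f y) : ℝ) : EReal)) := by
  obtain ⟨x₀, hx₀⟩ := hh.continuous.exists_forall_ge_of_hasCompactSupport hhc
  intro x
  rcases eq_or_lt_of_le (hh0 x₀) with h0 | hpos
  · have hx0 : h x = 0 := le_antisymm (h0 ▸ hx₀ x) (hh0 x)
    rw [hx0]
    exact le_trans (by norm_num) (le_max_left _ _)
  · -- fderiv vanishes at the max
    have hlm : IsLocalMax h x₀ := Filter.Eventually.of_forall fun y => hx₀ y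
    have hfd : fderiv ℝ h x₀ = 0 := hlm.fderiv_eq_zero
    -- Laplacian is nonpositive at the max
    have hlap : laplacian h x₀ ≤ 0 := by
      unfold laplacian
      apply Finset.sum_nonpos
      intro i _
      set v := stdOrthonormalBasis ℝ E i with hv
      have hline : ∀ t : ℝ, HasDerivAt (fun s : ℝ => x₀ + s • v) v t := by
        intro t
        have := ((hasDerivAt_id t).smul_const v).const_add x₀
        simpa using this
      have hgC : ContDiff ℝ 2 (fun t : ℝ => h (x₀ + t • v)) :=
        hh.comp (contDiff_const.add (contDiff_id.smul contDiff_const))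
      have hdg : deriv (fun t : ℝ => h (x₀ + t • v))
          = fun t => fderiv ℝ h (x₀ + t • v) v := by
        funext t
        exact (((hh.differentiable (by norm_num) (x₀ + t • v)).hasFDerivAt).comp_hasDerivAt
          t (hline t)).deriv
      have hf2 : DifferentiableAt ℝ (fderiv ℝ h) x₀ :=
        ((hh.fderiv_right (m := 1) (by norm_num)).differentiable (by norm_num)) x₀
      have h1 : HasFDerivAt (fderiv ℝ h) (fderiv ℝ (fderiv ℝ h) x₀) (x₀ + (0:ℝ) • v) := by
        simpa using hf2.hasFDerivAt
      have h2 : HasDerivAt (fun t : ℝ => fderiv ℝ h (x₀ + t • v))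
          (fderiv ℝ (fderiv ℝ h) x₀ v) 0 := h1.comp_hasDerivAt 0 (hline 0)
      have h3 : HasDerivAt (fun t : ℝ => fderiv ℝ h (x₀ + t • v) v)
          (fderiv ℝ (fderiv ℝ h) x₀ v v) 0 := by
        have := h2.clm_apply (hasDerivAt_const (0:ℝ) v)
        simpa using this
      have key : deriv (deriv (fun t : ℝ => h (x₀ + t • v))) 0
          = fderiv ℝ (fderiv ℝ h) x₀ v v := by
        rw [hdg]; exact h3.deriv
      rw [← key]
      exact secondDeriv_nonpos_of_max _ hgC (fun t => by simpa using hx₀ (x₀ + t • v))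
    -- algebra at the max point
    have heq0 := heq x₀
    rw [hfd] at heq0
    simp only [ContinuousLinearMap.zero_apply, sub_zero] at heq0
    have hNx := hN0 x₀
    have hsum : (1/4) * R x₀ * h x₀ + (1/4) * Real.exp (-f x₀) * (h x₀)^2 ≤ 0 := by
      nlinarith [hlap]
    have hexp : Real.exp (-f x₀) = (Real.exp (f x₀))⁻¹ := Real.exp_neg _
    have hcancel : Real.exp (f x₀) * (Real.exp (f x₀))⁻¹ = 1 :=
      mul_inv_cancel₀ (Real.exp_pos _).ne'
    have hkey : h x₀ ≤ -R x₀ * Real.exp (f x₀) := by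
      rw [hexp] at hsum
      nlinarith [Real.exp_pos (f x₀), hpos, hcancel]
    calc (h x : EReal) ≤ ((-R x₀ * Real.exp (f x₀) : ℝ) : EReal) := by
            exact_mod_cast le_trans (hx₀ x) hkey
      _ ≤ ⨆ y, ((-R y * Real.exp (f y) : ℝ) : EReal) :=
            le_iSup (fun y => ((-R y * Real.exp (f y) : ℝ) : EReal)) x₀
      _ ≤ max 0 (⨆ y, ((-R y * Real.exp (f y) : ℝ) : EReal)) := le_max_right _ _
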